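/- arXiv:2407.06734 — 4 statements merged into one kernel-verified Lean document; each statement's English description precedes it below -/
import Mathlib

section
/- Let g : ℝ → ℂ be of bounded variation, let x ∈ ℝ, let z, y satisfy x < y < z, and let r ≥ δ > 0. Then |(1/(2r)) ∫_{z−r}^{z+r} g − (1/(2r)) ∫_{y−r}^{y+r} g| ≤ (z−y)·Var(g)/(2δ). -/
open MeasureTheory

/-- Total variation over ℝ: supremum over monotone maps φ : ℤ → ℝ of
∑ₘ |g(φ(m+1)) − g(φ(m))|, valued in `ℝ≥0∞`. -/
noncomputable def totalVar (g : ℝ → ℂ) : ENNReal :=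
  ⨆ φ : {φ : ℤ → ℝ // Monotone φ},
    ∑' m : ℤ, ENNReal.ofReal ‖g (φ.1 (m + 1)) - g (φ.1 m)‖

lemma totalVar_pair (g : ℝ → ℂ) (hBV : totalVar g ≠ ⊤) (a b : ℝ) :
    ‖g b - g a‖ ≤ (totalVar g).toReal := by
  wlog hab : a ≤ b with H
  · rw [norm_sub_rev]; exact H g hBV b a (le_of_not_ge hab)
  set φ : ℤ → ℝ := fun m => if m ≤ 0 then a else b with hφ
  have hmono : Monotone φ := by
    intro m n hmn
    simp only [hφ]
    by_cases hm : m ≤ 0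
    · by_cases hn : n ≤ 0 <;> simp [hm, hn, hab, le_refl]
    · have h : ¬ n ≤ 0 := fun h => hm (hmn.trans h)
      simp [hm, h]
  have h1 : ENNReal.ofReal ‖g (φ (0 + 1)) - g (φ 0)‖ ≤
      ∑' m : ℤ, ENNReal.ofReal ‖g (φ (m + 1)) - g (φ m)‖ :=
    ENNReal.le_tsum 0
  have h2 : (∑' m : ℤ, ENNReal.ofReal ‖g (φ (m + 1)) - g (φ m)‖) ≤ totalVar g :=
    le_iSup (fun ψ : {ψ : ℤ → ℝ // Monotone ψ} =>
      ∑' m : ℤ, ENNReal.ofReal ‖g (ψ.1 (m + 1)) - g (ψ.1 m)‖) ⟨φ, hmono⟩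
  have h3 : ENNReal.ofReal ‖g b - g a‖ ≤ totalVar g := by
    have e0 : φ 0 = a := by norm_num [hφ]
    have e1 : φ (0 + 1) = b := by norm_num [hφ]
    rw [e0, e1] at h1
    exact h1.trans h2
  calc ‖g b - g a‖ = (ENNReal.ofReal ‖g b - g a‖).toReal := by
        rw [ENNReal.toReal_ofReal (norm_nonneg _)]
    _ ≤ (totalVar g).toReal := ENNReal.toReal_mono hBV h3

lemma g_bound (g : ℝ → ℂ) (hBV : totalVar g ≠ ⊤) (t : ℝ) :
    ‖g t‖ ≤ ‖g 0‖ + (totalVar g).toReal := by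
  calc ‖g t‖ = ‖g 0 + (g t - g 0)‖ := by ring_nf
    _ ≤ ‖g 0‖ + ‖g t - g 0‖ := norm_add_le _ _
    _ ≤ ‖g 0‖ + (totalVar g).toReal := by
        have := totalVar_pair g hBV 0 t; linarith

lemma intInt (g : ℝ → ℂ) (hmeas : Measurable g) (C : ℝ) (hC : ∀ t, ‖g t‖ ≤ C)
    (a b : ℝ) : IntervalIntegrable g volume a b := by
  rw [intervalIntegrable_iff]
  apply Integrable.mono' (g := fun _ => C)
    (integrableOn_const measure_Ioc_lt_top.ne)
  · exact hmeas.aestronglyMeasurable.restrict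
  · exact Filter.Eventually.of_forall fun t => hC t

theorem stmt1 (g : ℝ → ℂ) (hmeas : Measurable g) (hBV : totalVar g ≠ ⊤)
    (x y z : ℝ) (hxy : x < y) (hyz : y < z) (r δ : ℝ) (hδ : 0 < δ) (hr : δ ≤ r) :
    ‖(1 / (2 * r)) • (∫ t in (z - r)..(z + r), g t) -
      (1 / (2 * r)) • (∫ t in (y - r)..(y + r), g t)‖ ≤
      (z - y) * (totalVar g).toReal / (2 * δ) := by
  have hr0 : 0 < r := hδ.trans_le hr
  set V := (totalVar g).toReal with hV
  have hV0 : 0 ≤ V := ENNReal.toReal_nonneg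
  have hC : ∀ t, ‖g t‖ ≤ ‖g 0‖ + V := g_bound g hBV
  have hint : ∀ a b : ℝ, IntervalIntegrable g volume a b := intInt g hmeas _ hC
  have hint2 : ∀ a b : ℝ, IntervalIntegrable (fun t => g (t - 2*r)) volume a b :=
    intInt _ (hmeas.comp (measurable_id.sub measurable_const)) _ (fun t => hC _)
  have key : (∫ t in (z - r)..(z + r), g t) - (∫ t in (y - r)..(y + r), g t)
      = ∫ t in (y + r)..(z + r), (g t - g (t - 2*r)) := by
    have e1 : (∫ t in (y - r)..(y + r), g t) + (∫ t in (y+r)..(z+r), g t)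
        = ∫ t in (y - r)..(z + r), g t :=
      intervalIntegral.integral_add_adjacent_intervals (hint _ _) (hint _ _)
    have e2 : (∫ t in (y - r)..(z - r), g t) + (∫ t in (z - r)..(z + r), g t)
        = ∫ t in (y - r)..(z + r), g t :=
      intervalIntegral.integral_add_adjacent_intervals (hint _ _) (hint _ _)
    have e3 : (∫ t in (y + r)..(z + r), g (t - 2*r)) = ∫ t in (y - r)..(z - r), g t := by
      rw [intervalIntegral.integral_comp_sub_right (a := y + r) (b := z + r)
        (fun t => g t) (2*r)]
      congr 1 <;> ring
    rw [intervalIntegral.integral_sub (hint _ _) (hint2 _ _), e3]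
    linear_combination e2 - e1
  have hbound : ‖(∫ t in (y + r)..(z + r), (g t - g (t - 2*r)))‖ ≤ V * (z - y) := by
    have h := intervalIntegral.norm_integral_le_of_norm_le_const
      (a := y + r) (b := z + r) (C := V) (f := fun t => g t - g (t - 2*r))
      (fun t _ => totalVar_pair g hBV (t - 2*r) t)
    have : |z + r - (y + r)| = z - y := by
      rw [abs_of_nonneg (by linarith : (0:ℝ) ≤ z + r - (y + r))]; ring
    calc ‖(∫ t in (y + r)..(z + r), (g t - g (t - 2*r)))‖
        ≤ V * |z + r - (y + r)| := h
      _ = V * (z - y) := by rw [this]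
  rw [← smul_sub, norm_smul, key]
  have h2r : ‖(1 / (2*r))‖ = 1/(2*r) := by
    rw [Real.norm_eq_abs, abs_of_pos]; positivity
  have hzy : (0:ℝ) ≤ z - y := by linarith
  calc ‖(1/(2*r))‖ * ‖(∫ t in (y + r)..(z + r), (g t - g (t - 2*r)))‖
      ≤ (1/(2*r)) * (V * (z-y)) := by
        rw [h2r]; exact mul_le_mul_of_nonneg_left hbound (by positivity)
    _ ≤ (1/(2*δ)) * (V * (z-y)) := by
        apply mul_le_mul_of_nonneg_right _ (mul_nonneg hV0 hzy)
        gcongr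
    _ = (z - y) * V / (2*δ) := by ring
end

section
/- Let g : ℝ → ℂ be of bounded variation with |g|(−∞) = A and |g|(+∞) = B. Then lim_{x→+∞} Mg(x) = max{B, (A+B)/2} and lim_{x→−∞} Mg(x) = max{A, (A+B)/2}. -/
open MeasureTheory Filter Topology

/-- The centered Hardy–Littlewood maximal operator on ℝ. -/
noncomputable def cHL (g : ℝ → ℂ) (x : ℝ) : ℝ :=
  ⨆ r : {r : ℝ // 0 < r}, (1 / (2 * r.1)) * ∫ t in (x - r.1)..(x + r.1), ‖g t‖

lemma norm_sub_le_totalVar (g : ℝ → ℂ) (s t : ℝ) :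
    ENNReal.ofReal ‖g t - g s‖ ≤ totalVar g := by
  set a := min s t with ha
  set b := max s t with hb
  have hφ : Monotone (fun m : ℤ => if m ≤ 0 then a else b) := by
    intro m n hmn
    by_cases hm : m ≤ 0 <;> by_cases hn : n ≤ 0
    · simp [hm, hn]
    · simp only [if_pos hm, if_neg hn]; exact min_le_max
    · exact absurd (hmn.trans hn) hm
    · simp [hm, hn]
  have h1 : ENNReal.ofReal ‖g t - g s‖
      = ENNReal.ofReal ‖g ((fun m : ℤ => if m ≤ 0 then a else b) (0 + 1))
          - g ((fun m : ℤ => if m ≤ 0 then a else b) 0)‖ := by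
    norm_num
    rcases le_total s t with h | h
    · rw [ha, hb, min_eq_left h, max_eq_right h]
    · rw [ha, hb, min_eq_right h, max_eq_left h]
      exact enorm_sub_rev (g t) (g s)
  rw [h1]
  calc _ ≤ ∑' m : ℤ, ENNReal.ofReal
        ‖g ((fun m : ℤ => if m ≤ 0 then a else b) (m + 1))
          - g ((fun m : ℤ => if m ≤ 0 then a else b) m)‖ := ENNReal.le_tsum 0
    _ ≤ totalVar g := le_iSup (fun φ : {φ : ℤ → ℝ // Monotone φ} =>
        ∑' m : ℤ, ENNReal.ofReal ‖g (φ.1 (m + 1)) - g (φ.1 m)‖) ⟨_, hφ⟩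

def negEquiv : ℤ ≃ ℤ :=
  ⟨fun m => -m - 1, fun m => -m - 1, fun m => by ring, fun m => by ring⟩

lemma totalVar_neg_le (g : ℝ → ℂ) : totalVar (fun t => g (-t)) ≤ totalVar g := by
  refine iSup_le ?_
  rintro ⟨φ, hφ⟩
  have hψ : Monotone (fun m : ℤ => -φ (-m)) := by
    intro u v huv
    have : φ (-v) ≤ φ (-u) := hφ (by omega)
    simpa using this
  refine le_trans (le_of_eq ?_) (le_iSup (fun φ : {φ : ℤ → ℝ // Monotone φ} =>
      ∑' m : ℤ, ENNReal.ofReal ‖g (φ.1 (m + 1)) - g (φ.1 m)‖) ⟨_, hψ⟩)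
  calc ∑' m : ℤ, ENNReal.ofReal ‖g (-φ (m + 1)) - g (-φ m)‖
      = ∑' m : ℤ, (fun k : ℤ => ENNReal.ofReal ‖g (-φ (-(k + 1))) - g (-φ (-k))‖)
          (negEquiv m) := by
        apply tsum_congr
        intro m
        show _ = ENNReal.ofReal ‖g (-φ (-((-m - 1) + 1))) - g (-φ (-(-m - 1)))‖
        rw [show -((-m - 1) + 1) = m by ring, show -(-m - 1) = m + 1 by ring, norm_sub_rev]
    _ = ∑' m : ℤ, ENNReal.ofReal ‖g (-φ (-(m + 1))) - g (-φ (-m))‖ := negEquiv.tsum_eq (fun k : ℤ => ENNReal.ofReal ‖g (-φ (-(k + 1))) - g (-φ (-k))‖)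

lemma cHL_neg (g : ℝ → ℂ) (x : ℝ) : cHL (fun t => g (-t)) x = cHL g (-x) := by
  unfold cHL
  congr 1
  funext r
  congr 1
  have h := intervalIntegral.integral_comp_neg (fun t => ‖g t‖) (a := x - r.1) (b := x + r.1)
  calc (∫ t in x - r.1..x + r.1, ‖g (-t)‖) = ∫ t in -(x + r.1)..-(x - r.1), ‖g t‖ := h
    _ = ∫ t in (-x - r.1)..(-x + r.1), ‖g t‖ := by congr 1 <;> ring

set_option maxHeartbeats 1000000 in
lemma mainTop (g : ℝ → ℂ) (hmeas : Measurable g) (hBV : totalVar g ≠ ⊤)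
    (A B : ℝ)
    (hA : Tendsto (fun x => ‖g x‖) atBot (𝓝 A))
    (hB : Tendsto (fun x => ‖g x‖) atTop (𝓝 B)) :
    Tendsto (cHL g) atTop (𝓝 (max B ((A + B) / 2))) := by
  haveI : Nonempty {r : ℝ // 0 < r} := ⟨⟨1, one_pos⟩⟩
  set C : ℝ := ‖g 0‖ + (totalVar g).toReal with hCdef
  have hC : ∀ t : ℝ, ‖g t‖ ≤ C := by
    intro t
    have h1 : ENNReal.ofReal ‖g t - g 0‖ ≤ totalVar g := norm_sub_le_totalVar g 0 t
    have h2 : ‖g t - g 0‖ ≤ (totalVar g).toReal := by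
      have := ENNReal.toReal_mono hBV h1
      rwa [ENNReal.toReal_ofReal (norm_nonneg _)] at this
    calc ‖g t‖ = ‖g t - g 0 + g 0‖ := by ring_nf
      _ ≤ ‖g t - g 0‖ + ‖g 0‖ := norm_add_le _ _
      _ ≤ C := by rw [hCdef]; linarith
  have hC0 : 0 ≤ C := le_trans (norm_nonneg (g 0)) (hC 0)
  have hA0 : 0 ≤ A := ge_of_tendsto' hA (fun t => norm_nonneg _)
  have hB0 : 0 ≤ B := ge_of_tendsto' hB (fun t => norm_nonneg _)
  have hInt : ∀ a b : ℝ, IntervalIntegrable (fun t => ‖g t‖) volume a b := by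
    intro a b
    refine (intervalIntegrable_const (c := C)).mono_fun' hmeas.norm.aestronglyMeasurable ?_
    refine Filter.Eventually.of_forall fun t => ?_
    show ‖‖g t‖‖ ≤ C
    rw [Real.norm_eq_abs, abs_of_nonneg (norm_nonneg _)]
    exact hC t
  -- constant bounds for interval integrals
  have hIle : ∀ a b K : ℝ, a ≤ b → (∀ t ∈ Set.Icc a b, ‖g t‖ ≤ K) →
      (∫ t in a..b, ‖g t‖) ≤ (b - a) * K := by
    intro a b K hab hK
    calc (∫ t in a..b, ‖g t‖) ≤ ∫ _t in a..b, K :=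
        intervalIntegral.integral_mono_on hab (hInt a b) intervalIntegrable_const hK
      _ = (b - a) * K := by rw [intervalIntegral.integral_const, smul_eq_mul]
  have hIge : ∀ a b K : ℝ, a ≤ b → (∀ t ∈ Set.Icc a b, K ≤ ‖g t‖) →
      (b - a) * K ≤ ∫ t in a..b, ‖g t‖ := by
    intro a b K hab hK
    calc (b - a) * K = ∫ _t in a..b, K := by rw [intervalIntegral.integral_const, smul_eq_mul]
      _ ≤ ∫ t in a..b, ‖g t‖ :=
        intervalIntegral.integral_mono_on hab intervalIntegrable_const (hInt a b) hK
  have hBdd : ∀ x : ℝ, BddAbove (Set.range fun r : {r : ℝ // 0 < r} =>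
      (1 / (2 * r.1)) * ∫ t in (x - r.1)..(x + r.1), ‖g t‖) := by
    intro x
    refine ⟨C, ?_⟩
    rintro y ⟨⟨r, hr⟩, rfl⟩
    have h1 : (∫ t in x - r..x + r, ‖g t‖) ≤ (2 * r) * C := by
      have := hIle (x - r) (x + r) C (by linarith) (fun t _ => hC t)
      calc (∫ t in x - r..x + r, ‖g t‖) ≤ ((x + r) - (x - r)) * C := this
        _ = (2 * r) * C := by ring_nf
    have h2r : (0:ℝ) < 2 * r := by linarith
    calc (1 / (2 * r)) * ∫ t in x - r..x + r, ‖g t‖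
        ≤ (1 / (2 * r)) * ((2 * r) * C) := by
          apply mul_le_mul_of_nonneg_left h1 (by positivity)
      _ = C := by field_simp
  set M : ℝ := max B ((A + B) / 2) with hMdef
  have hM1 : B ≤ M := le_max_left _ _
  have hM2 : (A + B) / 2 ≤ M := le_max_right _ _
  rw [Metric.tendsto_nhds]
  intro ε hε
  set δ : ℝ := ε / 8 with hδdef
  have hδ : 0 < δ := by positivity
  -- get thresholds from the limits
  obtain ⟨T₁, hT₁⟩ := eventually_atTop.mp (Metric.tendsto_nhds.mp hB δ hδ)
  obtain ⟨T₂, hT₂⟩ := eventually_atBot.mp (Metric.tendsto_nhds.mp hA δ hδ)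
  set T : ℝ := max 1 (max T₁ (-T₂)) with hTdef
  have hT1 : 1 ≤ T := le_max_left _ _
  have hT0 : 0 ≤ T := by linarith
  have hgB : ∀ t : ℝ, T ≤ t → ‖g t‖ ≤ B + δ := by
    intro t ht
    have := hT₁ t (le_trans (le_trans (le_max_left _ _) (le_max_right _ _)) ht)
    rw [Real.dist_eq, abs_lt] at this
    linarith [this.2]
  have hgB' : ∀ t : ℝ, T ≤ t → B - δ ≤ ‖g t‖ := by
    intro t ht
    have := hT₁ t (le_trans (le_trans (le_max_left _ _) (le_max_right _ _)) ht)
    rw [Real.dist_eq, abs_lt] at this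
    linarith [this.1]
  have hgA : ∀ t : ℝ, t ≤ -T → ‖g t‖ ≤ A + δ := by
    intro t ht
    have hle : t ≤ T₂ := by
      have : -T₂ ≤ T := le_trans (le_max_right _ _) (le_max_right _ _)
      linarith
    have := hT₂ t hle
    rw [Real.dist_eq, abs_lt] at this
    linarith [this.2]
  have hgA' : ∀ t : ℝ, t ≤ -T → A - δ ≤ ‖g t‖ := by
    intro t ht
    have hle : t ≤ T₂ := by
      have : -T₂ ≤ T := le_trans (le_max_right _ _) (le_max_right _ _)
      linarith
    have := hT₂ t hle
    rw [Real.dist_eq, abs_lt] at this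
    linarith [this.1]
  -- upper bound
  have hUB : ∀ x : ℝ, T + T * C / δ + 1 ≤ x → cHL g x ≤ M + 2 * δ := by
    intro x hx
    have hxT : T ≤ x := by
      have : 0 ≤ T * C / δ := by positivity
      linarith
    have hTC : T * C ≤ δ * (x - T) := by
      have h1 : T * C / δ ≤ x - T - 1 := by linarith
      have := mul_le_mul_of_nonneg_left h1 hδ.le
      rw [mul_div_cancel₀ _ (ne_of_gt hδ)] at this
      linarith
    have hiSup : cHL g x = ⨆ r : {r : ℝ // 0 < r},
        (1 / (2 * r.1)) * ∫ t in (x - r.1)..(x + r.1), ‖g t‖ := rfl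
    rw [hiSup]
    refine ciSup_le ?_
    rintro ⟨r, hr⟩
    have h2r : (0:ℝ) < 2 * r := by linarith
    have hkey : (∫ t in x - r..x + r, ‖g t‖) ≤ (M + 2 * δ) * (2 * r) := by
      rcases le_or_gt r (x - T) with hcase | hcase
      · -- small r : interval inside [T, ∞)
        have hle : (∫ t in x - r..x + r, ‖g t‖) ≤ ((x + r) - (x - r)) * (B + δ) :=
          hIle _ _ _ (by linarith) (fun t ht => hgB t (by
            simp only [Set.mem_Icc] at ht; linarith [ht.1]))
        linarith [mul_nonneg hr.le (by linarith : (0:ℝ) ≤ M - B),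
          mul_nonneg hr.le hδ.le, hle]
      · rcases le_or_gt r (x + T) with hcase2 | hcase2
        · -- middle r
          have hsplit : (∫ t in x - r..T, ‖g t‖) + (∫ t in T..x + r, ‖g t‖)
              = ∫ t in x - r..x + r, ‖g t‖ :=
            intervalIntegral.integral_add_adjacent_intervals (hInt _ _) (hInt _ _)
          rw [← hsplit]
          have hp1 : (∫ t in x - r..T, ‖g t‖) ≤ (T - (x - r)) * C :=
            hIle _ _ _ (by linarith) (fun t _ => hC t)
          have hp2 : (∫ t in T..x + r, ‖g t‖) ≤ ((x + r) - T) * (B + δ) :=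
            hIle _ _ _ (by linarith) (fun t ht => hgB t (by
              simp only [Set.mem_Icc] at ht; exact ht.1))
          have f1 : 0 ≤ (x + T - r) * C := mul_nonneg (by linarith) hC0
          have f2 : 0 ≤ (r - x + T) * (B + δ) := mul_nonneg (by linarith) (by linarith)
          have f3 : 0 ≤ r * (M - B) := mul_nonneg hr.le (by linarith)
          have f4 : 0 ≤ δ * (r - (x - T)) := mul_nonneg hδ.le (by linarith)
          linarith [hp1, hp2, f1, f2, f3, f4, hTC]
        · -- large r
          have hs1 : (∫ t in x - r..(-T), ‖g t‖) + (∫ t in (-T)..x + r, ‖g t‖)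
              = ∫ t in x - r..x + r, ‖g t‖ :=
            intervalIntegral.integral_add_adjacent_intervals (hInt _ _) (hInt _ _)
          have hs2 : (∫ t in (-T)..T, ‖g t‖) + (∫ t in T..x + r, ‖g t‖)
              = ∫ t in (-T)..x + r, ‖g t‖ :=
            intervalIntegral.integral_add_adjacent_intervals (hInt _ _) (hInt _ _)
          rw [← hs1, ← hs2]
          have hp1 : (∫ t in x - r..(-T), ‖g t‖) ≤ ((-T) - (x - r)) * (A + δ) :=
            hIle _ _ _ (by linarith) (fun t ht => hgA t (by
              simp only [Set.mem_Icc] at ht; exact ht.2))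
          have hp2 : (∫ t in (-T)..T, ‖g t‖) ≤ (T - (-T)) * C :=
            hIle _ _ _ (by linarith) (fun t _ => hC t)
          have hp3 : (∫ t in T..x + r, ‖g t‖) ≤ ((x + r) - T) * (B + δ) :=
            hIle _ _ _ (by linarith) (fun t ht => hgB t (by
              simp only [Set.mem_Icc] at ht; exact ht.1))
          have f4 : 0 ≤ δ * (r - (x - T)) := mul_nonneg hδ.le (by linarith)
          rcases le_total A B with hAB | hAB
          · have f1 : 0 ≤ (r - x - T) * (B - A) := mul_nonneg (by linarith) (by linarith)
            have f2 : 0 ≤ (r - x - T) * (M - B) := mul_nonneg (by linarith) (by linarith)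
            have f3 : 0 ≤ ((x + r) - T) * (M - B) := mul_nonneg (by linarith) (by linarith)
            have f5 : 0 ≤ T * (B + δ) := mul_nonneg hT0 (by linarith)
            have f6 : 0 ≤ T * (A + δ) := mul_nonneg hT0 (by linarith)
            have f7 : 0 ≤ T * (M + δ) := mul_nonneg hT0 (by linarith)
            linarith [hp1, hp2, hp3, f1, f2, f3, f4, f5, f6, f7, hTC]
          · have key : (B + δ) * (x - T) ≤ (A + δ) * (x + T) :=
              mul_le_mul (by linarith) (by linarith) (by linarith) (by linarith)
            have f5 : 0 ≤ r * (2 * M - A - B) := mul_nonneg hr.le (by linarith)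
            linarith [hp1, hp2, hp3, key, f4, f5, hTC]
    calc (1 / (2 * r)) * ∫ t in x - r..x + r, ‖g t‖
        ≤ (1 / (2 * r)) * ((M + 2 * δ) * (2 * r)) := by
          apply mul_le_mul_of_nonneg_left hkey (by positivity)
      _ = M + 2 * δ := by field_simp
  -- lower bound
  have hLB : ∀ x : ℝ, T + 1 + (|B - A| + (A + B) * T) / (2 * δ) ≤ x →
      M - 2 * δ ≤ cHL g x := by
    intro x hx
    have hq0 : 0 ≤ (|B - A| + (A + B) * T) / (2 * δ) := by positivity
    have hxT : T + 1 ≤ x := by linarith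
    have hx1 : 1 ≤ x := by linarith
    have hx0 : 0 < x := by linarith
    have h2dx : |B - A| + (A + B) * T ≤ 2 * δ * x := by
      have h1 : (|B - A| + (A + B) * T) / (2 * δ) ≤ x := by linarith
      have := mul_le_mul_of_nonneg_left h1 (by positivity : (0:ℝ) ≤ 2 * δ)
      rw [mul_div_cancel₀ _ (by positivity : (2:ℝ) * δ ≠ 0)] at this
      linarith
    have hiSup : cHL g x = ⨆ r : {r : ℝ // 0 < r},
        (1 / (2 * r.1)) * ∫ t in (x - r.1)..(x + r.1), ‖g t‖ := rfl
    -- lower bound with r = 1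
    have hb1 : B - δ ≤ cHL g x := by
      have hge : (1 : ℝ) * 2 * (B - δ) ≤ ∫ t in (x - 1)..(x + 1), ‖g t‖ := by
        have := hIge (x - 1) (x + 1) (B - δ) (by linarith) (fun t ht => hgB' t (by
          simp only [Set.mem_Icc] at ht; linarith [ht.1]))
        linarith [this]
      have h1 : B - δ ≤ (1 / (2 * (1:ℝ))) * ∫ t in (x - 1)..(x + 1), ‖g t‖ := by
        linarith [hge]
      have h2 := le_ciSup (hBdd x) (⟨1, one_pos⟩ : {r : ℝ // 0 < r})
      rw [hiSup]
      exact le_trans h1 h2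
    -- lower bound with r = x^2
    have hb2 : (A + B) / 2 - 2 * δ ≤ cHL g x := by
      have hr : (0:ℝ) < x * x := by positivity
      have hends : x - x * x ≤ -T := by
        linarith [mul_le_mul_of_nonneg_left hxT hx0.le, mul_le_mul_of_nonneg_right hx1 hT0]
      have hends2 : T ≤ x + x * x := by linarith [mul_nonneg hx0.le hx0.le]
      have hs1 : (∫ t in x - x * x..(-T), ‖g t‖) + (∫ t in (-T)..x + x * x, ‖g t‖)
          = ∫ t in x - x * x..x + x * x, ‖g t‖ :=
        intervalIntegral.integral_add_adjacent_intervals (hInt _ _) (hInt _ _)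
      have hs2 : (∫ t in (-T)..T, ‖g t‖) + (∫ t in T..x + x * x, ‖g t‖)
          = ∫ t in (-T)..x + x * x, ‖g t‖ :=
        intervalIntegral.integral_add_adjacent_intervals (hInt _ _) (hInt _ _)
      have hp1 : ((-T) - (x - x * x)) * (A - δ) ≤ ∫ t in x - x * x..(-T), ‖g t‖ :=
        hIge _ _ _ (by linarith) (fun t ht => hgA' t (by
          simp only [Set.mem_Icc] at ht; exact ht.2))
      have hp2 : (0:ℝ) ≤ ∫ t in (-T)..T, ‖g t‖ :=
        intervalIntegral.integral_nonneg (by linarith) (fun t _ => norm_nonneg _)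
      have hp3 : ((x + x * x) - T) * (B - δ) ≤ ∫ t in T..x + x * x, ‖g t‖ :=
        hIge _ _ _ (by linarith) (fun t ht => hgB' t (by
          simp only [Set.mem_Icc] at ht; exact ht.1))
      have habs1 : B - A ≤ |B - A| := le_abs_self _
      have habs2 : A - B ≤ |B - A| := by
        rw [abs_sub_comm]; exact le_abs_self _
      have hABT : 0 ≤ (A + B) * T := mul_nonneg (by linarith) hT0
      have hint1 : (|B - A| + (A + B) * T) * x ≤ 2 * δ * x * x := by
        linarith [mul_le_mul_of_nonneg_right h2dx hx0.le]
      have hint2 : (A - B) * x ≤ |B - A| * x := mul_le_mul_of_nonneg_right habs2 hx0.le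
      have hint3 : 0 ≤ (A + B) * T * (x - 1) := mul_nonneg hABT (by linarith)
      have hkey : ((A + B) / 2 - 2 * δ) * (2 * (x * x)) ≤ ∫ t in x - x * x..x + x * x, ‖g t‖ := by
        rw [← hs1, ← hs2]
        linarith [hp1, hp2, hp3, hint1, hint2, hint3, mul_nonneg hδ.le hT0]
      have h1 : (A + B) / 2 - 2 * δ ≤ (1 / (2 * (x * x))) * ∫ t in x - x * x..x + x * x, ‖g t‖ := by
        have h2r : (0:ℝ) < 2 * (x * x) := by positivity
        have := mul_le_mul_of_nonneg_left hkey (by positivity : (0:ℝ) ≤ 1 / (2 * (x * x)))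
        calc (A + B) / 2 - 2 * δ = (1 / (2 * (x * x))) * (((A + B) / 2 - 2 * δ) * (2 * (x * x))) := by
              field_simp
          _ ≤ _ := this
      have h2 := le_ciSup (hBdd x) (⟨x * x, hr⟩ : {r : ℝ // 0 < r})
      rw [hiSup]
      exact le_trans h1 h2
    have : M ≤ cHL g x + 2 * δ := max_le (by linarith) (by linarith)
    linarith
  -- combine
  have hev1 := eventually_ge_atTop (T + T * C / δ + 1)
  have hev2 := eventually_ge_atTop (T + 1 + (|B - A| + (A + B) * T) / (2 * δ))
  filter_upwards [hev1, hev2] with x h1 h2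
  have hu := hUB x h1
  have hl := hLB x h2
  rw [Real.dist_eq, abs_lt]
  constructor <;> simp only [hδdef] at hu hl <;> [linarith; linarith]

theorem stmt3 (g : ℝ → ℂ) (hmeas : Measurable g) (hBV : totalVar g ≠ ⊤)
    (A B : ℝ)
    (hA : Tendsto (fun x => ‖g x‖) atBot (𝓝 A))
    (hB : Tendsto (fun x => ‖g x‖) atTop (𝓝 B)) :
    Tendsto (cHL g) atTop (𝓝 (max B ((A + B) / 2))) ∧
      Tendsto (cHL g) atBot (𝓝 (max A ((A + B) / 2))) := by
  constructor
  · exact mainTop g hmeas hBV A B hA hB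
  · set g' : ℝ → ℂ := fun t => g (-t) with hg'
    have hmeas' : Measurable g' := hmeas.comp measurable_neg
    have hBV' : totalVar g' ≠ ⊤ :=
      (lt_of_le_of_lt (totalVar_neg_le g) (lt_top_iff_ne_top.mpr hBV)).ne
    have hA' : Tendsto (fun x => ‖g' x‖) atBot (𝓝 B) := hB.comp tendsto_neg_atBot_atTop
    have hB' : Tendsto (fun x => ‖g' x‖) atTop (𝓝 A) := hA.comp tendsto_neg_atTop_atBot
    have h1 := mainTop g' hmeas' hBV' B A hA' hB'
    have h2 : Tendsto (fun y => cHL g' (-y)) atBot (𝓝 (max A ((B + A) / 2))) :=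
      h1.comp tendsto_neg_atBot_atTop
    have h3 : (fun y => cHL g' (-y)) = cHL g := by
      funext y
      show cHL g' (-y) = cHL g y
      rw [hg', cHL_neg, neg_neg]
    rw [show (A + B) / 2 = (B + A) / 2 by ring]
    rwa [h3] at h2
end

section
/- Let g : ℝ → ℂ be of bounded variation. Then for every x ∈ ℝ, the one-sided limits Mg(x⁻) and Mg(x⁺) of the centered maximal function exist and Mg(x) = min{Mg(x⁻), Mg(x⁺)}. -/
open MeasureTheory Filter Topology Set

namespace StmtAux

instance : Nonempty {r : ℝ // 0 < r} := ⟨⟨1, one_pos⟩⟩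

noncomputable def MA (h : ℝ → ℝ) (y r : ℝ) : ℝ :=
  (1 / (2 * r)) * ∫ t in (y - r)..(y + r), h t

noncomputable def MF (h : ℝ → ℝ) (y : ℝ) : ℝ :=
  ⨆ r : {r : ℝ // 0 < r}, MA h y r.1

structure Nice (h : ℝ → ℝ) (C : ℝ) : Prop where
  meas : Measurable h
  nonneg : ∀ t, 0 ≤ h t
  bound : ∀ t, h t ≤ C

variable {h : ℝ → ℝ} {C : ℝ}

lemma Nice.C_nonneg (hn : Nice h C) : 0 ≤ C := (hn.nonneg 0).trans (hn.bound 0)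

lemma Nice.integrable (hn : Nice h C) (a b : ℝ) : IntervalIntegrable h volume a b := by
  rw [intervalIntegrable_iff]
  refine Measure.integrableOn_of_bounded (M := C) ?_ hn.meas.aestronglyMeasurable
    (ae_of_all _ fun t => ?_)
  · rw [Set.uIoc]; exact measure_Ioc_lt_top.ne
  · rw [Real.norm_eq_abs, abs_of_nonneg (hn.nonneg t)]; exact hn.bound t

lemma Nice.ae_ne (b : ℝ) : ∀ᵐ t : ℝ, t ≠ b := by
  have : volume ({b} : Set ℝ) = 0 := Real.volume_singleton
  rw [ae_iff]
  convert this using 2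
  ext t; simp

lemma int_le_of_forall_Ioo (hn : Nice h C) {a b K : ℝ} (hab : a ≤ b)
    (hK : ∀ t ∈ Ioo a b, h t ≤ K) : ∫ t in a..b, h t ≤ (b - a) * K := by
  rw [intervalIntegral.integral_of_le hab]
  have h1 : ∫ t in Ioc a b, h t ≤ ∫ _t in Ioc a b, K := by
    apply setIntegral_mono_ae_restrict
    · have := hn.integrable a b
      rw [intervalIntegrable_iff, uIoc_of_le hab] at this
      exact this
    · exact integrableOn_const measure_Ioc_lt_top.ne
    · refine (ae_restrict_iff' measurableSet_Ioc).2 ?_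
      filter_upwards [Nice.ae_ne b] with t htb ht
      exact hK t ⟨ht.1, lt_of_le_of_ne ht.2 htb⟩
  calc ∫ t in Ioc a b, h t ≤ ∫ _t in Ioc a b, K := h1
    _ = (b - a) * K := by
        rw [setIntegral_const, Real.volume_real_Ioc_of_le hab, smul_eq_mul]

lemma int_ge_of_forall_Ioo (hn : Nice h C) {a b K : ℝ} (hab : a ≤ b)
    (hK : ∀ t ∈ Ioo a b, K ≤ h t) : (b - a) * K ≤ ∫ t in a..b, h t := by
  rw [intervalIntegral.integral_of_le hab]
  have h1 : ∫ _t in Ioc a b, K ≤ ∫ t in Ioc a b, h t := by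
    apply setIntegral_mono_ae_restrict
    · exact integrableOn_const measure_Ioc_lt_top.ne
    · have := hn.integrable a b
      rw [intervalIntegrable_iff, uIoc_of_le hab] at this
      exact this
    · refine (ae_restrict_iff' measurableSet_Ioc).2 ?_
      filter_upwards [Nice.ae_ne b] with t htb ht
      exact hK t ⟨ht.1, lt_of_le_of_ne ht.2 htb⟩
  calc (b - a) * K = ∫ _t in Ioc a b, K := by
        rw [setIntegral_const, Real.volume_real_Ioc_of_le hab, smul_eq_mul]
    _ ≤ ∫ t in Ioc a b, h t := h1

lemma MA_nonneg (hn : Nice h C) {y r : ℝ} (hr : 0 < r) : 0 ≤ MA h y r :=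
  mul_nonneg (by positivity)
    (intervalIntegral.integral_nonneg (by linarith) fun t _ => hn.nonneg t)

lemma MA_le (hn : Nice h C) {y r : ℝ} (hr : 0 < r) : MA h y r ≤ C := by
  have hint := int_le_of_forall_Ioo hn (a := y - r) (b := y + r) (by linarith)
    (fun t _ => hn.bound t)
  unfold MA
  calc (1/(2*r)) * ∫ t in (y - r)..(y + r), h t
      ≤ (1/(2*r)) * ((y + r - (y - r)) * C) :=
        mul_le_mul_of_nonneg_left hint (by positivity)
    _ = C := by field_simp; ring

lemma MF_bddAbove (hn : Nice h C) (y : ℝ) :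
    BddAbove (Set.range fun r : {r : ℝ // 0 < r} => MA h y r.1) := by
  refine ⟨C, ?_⟩
  rintro _ ⟨r, rfl⟩
  exact MA_le hn r.2

lemma MA_le_MF (hn : Nice h C) (y : ℝ) (r : {r : ℝ // 0 < r}) : MA h y r.1 ≤ MF h y :=
  le_ciSup (MF_bddAbove hn y) r

lemma MF_le (_hn : Nice h C) (y : ℝ) {K : ℝ} (hK : ∀ r : ℝ, 0 < r → MA h y r ≤ K) :
    MF h y ≤ K :=
  ciSup_le fun r => hK r.1 r.2

lemma MF_nonneg (hn : Nice h C) (y : ℝ) : 0 ≤ MF h y :=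
  le_trans (MA_nonneg hn one_pos) (MA_le_MF hn y ⟨1, one_pos⟩)

lemma MF_le_C (hn : Nice h C) (y : ℝ) : MF h y ≤ C :=
  MF_le hn y fun _r hr => MA_le hn hr

lemma MA_le_center (hn : Nice h C) {x y r : ℝ} (hr : 0 < r) :
    MA h y r ≤ (1 + |y - x| / r) * MF h x := by
  set d := |y - x| with hd
  have hd0 : 0 ≤ d := abs_nonneg _
  have hn1 : -d ≤ y - x := neg_abs_le _
  have hn2 : y - x ≤ d := le_abs_self _
  have hrd : 0 < r + d := by linarith
  have hmono : ∫ t in (y - r)..(y + r), h t ≤ ∫ t in (x - (r + d))..(x + (r + d)), h t :=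
    intervalIntegral.integral_mono_interval (by linarith) (by linarith) (by linarith)
      (ae_of_all _ fun t => hn.nonneg t) (hn.integrable _ _)
  have hMA : MA h x (r + d) ≤ MF h x := MA_le_MF hn x ⟨r + d, hrd⟩
  have hMA0 : 0 ≤ MA h x (r + d) := MA_nonneg hn hrd
  have key : MA h y r ≤ ((r + d) / r) * MA h x (r + d) := by
    unfold MA
    calc (1/(2*r)) * ∫ t in (y - r)..(y + r), h t
        ≤ (1/(2*r)) * ∫ t in (x - (r + d))..(x + (r + d)), h t :=
          mul_le_mul_of_nonneg_left hmono (by positivity)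
      _ = ((r + d) / r) * ((1/(2*(r + d))) * ∫ t in (x - (r + d))..(x + (r + d)), h t) := by
          field_simp
  calc MA h y r ≤ ((r + d) / r) * MA h x (r + d) := key
    _ ≤ ((r + d) / r) * MF h x := mul_le_mul_of_nonneg_left hMA (by positivity)
    _ = (1 + d / r) * MF h x := by rw [add_div, div_self hr.ne']

lemma MA_ge_shift (hn : Nice h C) {x y r : ℝ} (hr : 0 < r) :
    MA h x r - (C / r) * |y - x| ≤ MA h y r := by
  have hi := hn.integrable
  have e1 : (∫ t in (y - r)..(x - r), h t) + (∫ t in (x - r)..(x + r), h t) =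
      ∫ t in (y - r)..(x + r), h t :=
    intervalIntegral.integral_add_adjacent_intervals (hi _ _) (hi _ _)
  have e2 : (∫ t in (y - r)..(x + r), h t) + (∫ t in (x + r)..(y + r), h t) =
      ∫ t in (y - r)..(y + r), h t :=
    intervalIntegral.integral_add_adjacent_intervals (hi _ _) (hi _ _)
  have hb : ∀ a b : ℝ, |∫ t in a..b, h t| ≤ C * |b - a| := by
    intro a b
    have := intervalIntegral.norm_integral_le_of_norm_le_const (a := a) (b := b) (C := C)
      (f := h) (fun t _ => by rw [Real.norm_eq_abs, abs_of_nonneg (hn.nonneg t)]; exact hn.bound t)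
    rwa [Real.norm_eq_abs] at this
  have b1 : -(C * |y - x|) ≤ ∫ t in (y - r)..(x - r), h t := by
    have h1 := hb (y - r) (x - r)
    have h2 : |x - r - (y - r)| = |y - x| := by rw [abs_sub_comm]; congr 1; ring
    rw [h2] at h1
    linarith [(abs_le.1 h1).1]
  have b2 : -(C * |y - x|) ≤ ∫ t in (x + r)..(y + r), h t := by
    have h1 := hb (x + r) (y + r)
    have h2 : |y + r - (x + r)| = |y - x| := by congr 1; ring
    rw [h2] at h1
    linarith [(abs_le.1 h1).1]
  unfold MA
  have hsum : (∫ t in (x - r)..(x + r), h t) - 2 * (C * |y - x|) ≤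
      ∫ t in (y - r)..(y + r), h t := by
    rw [← e2, ← e1]; linarith
  calc (1/(2*r)) * (∫ t in (x - r)..(x + r), h t) - (C / r) * |y - x|
      = (1/(2*r)) * ((∫ t in (x - r)..(x + r), h t) - 2 * (C * |y - x|)) := by
        field_simp
    _ ≤ (1/(2*r)) * ∫ t in (y - r)..(y + r), h t :=
        mul_le_mul_of_nonneg_left hsum (by positivity)

lemma MF_ge_mid (hn : Nice h C) {x L R δ ε : ℝ} (hδ : 0 < δ)
    (hL : ∀ t ∈ Ioo (x - δ) x, L - ε ≤ h t) (hR : ∀ t ∈ Ioo x (x + δ), R - ε ≤ h t) :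
    (L + R) / 2 - ε ≤ MF h x := by
  have i1 := int_ge_of_forall_Ioo hn (a := x - δ) (b := x) (K := L - ε) (by linarith) hL
  have i2 := int_ge_of_forall_Ioo hn (a := x) (b := x + δ) (K := R - ε) (by linarith) hR
  have e : (∫ t in (x - δ)..x, h t) + (∫ t in x..(x + δ), h t) =
      ∫ t in (x - δ)..(x + δ), h t :=
    intervalIntegral.integral_add_adjacent_intervals (hn.integrable _ _) (hn.integrable _ _)
  have hMA : (L + R) / 2 - ε ≤ MA h x δ := by
    unfold MA
    rw [← e]
    have hle : δ * ((L - ε) + (R - ε)) ≤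
        (∫ t in (x - δ)..x, h t) + ∫ t in x..(x + δ), h t := by
      have : x - (x - δ) = δ := by ring
      rw [this] at i1
      have : x + δ - x = δ := by ring
      rw [this] at i2
      linarith
    calc (L + R) / 2 - ε = (1/(2*δ)) * (δ * ((L - ε) + (R - ε))) := by field_simp; ring
      _ ≤ (1/(2*δ)) * ((∫ t in (x - δ)..x, h t) + ∫ t in x..(x + δ), h t) :=
          mul_le_mul_of_nonneg_left hle (by positivity)
  exact hMA.trans (MA_le_MF hn x ⟨δ, hδ⟩)

lemma exists_osc {x L R ε : ℝ} (hε : 0 < ε)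
    (hLt : Tendsto h (𝓝[<] x) (𝓝 L)) (hRt : Tendsto h (𝓝[>] x) (𝓝 R)) :
    ∃ δ > 0, (∀ t ∈ Ioo (x - δ) x, |h t - L| < ε) ∧
      (∀ t ∈ Ioo x (x + δ), |h t - R| < ε) := by
  have h1 : {t | |h t - L| < ε} ∈ 𝓝[<] x := by
    have := hLt (Metric.ball_mem_nhds L hε)
    simpa [Metric.ball, Real.dist_eq] using this
  have h2 : {t | |h t - R| < ε} ∈ 𝓝[>] x := by
    have := hRt (Metric.ball_mem_nhds R hε)
    simpa [Metric.ball, Real.dist_eq] using this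
  rw [mem_nhdsLT_iff_exists_Ioo_subset] at h1
  rw [mem_nhdsGT_iff_exists_Ioo_subset] at h2
  obtain ⟨l, hl, hsl⟩ := h1
  obtain ⟨u, hu, hsu⟩ := h2
  rw [mem_Iio] at hl
  rw [mem_Ioi] at hu
  refine ⟨min (x - l) (u - x), by simp [hl, hu], ?_, ?_⟩
  · intro t ht
    refine hsl ⟨?_, ht.2⟩
    have := ht.1
    have h3 : x - min (x - l) (u - x) ≥ x - (x - l) := by
      have := min_le_left (x - l) (u - x); linarith
    have : x - (x - l) = l := by ring
    linarith [ht.1, h3]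
  · intro t ht
    refine hsu ⟨ht.1, ?_⟩
    have h3 := min_le_right (x - l) (u - x)
    have := ht.2
    linarith

set_option maxHeartbeats 1000000 in
lemma MF_tendsto_right (hn : Nice h C) {x L R : ℝ}
    (hLt : Tendsto h (𝓝[<] x) (𝓝 L)) (hRt : Tendsto h (𝓝[>] x) (𝓝 R)) :
    Tendsto (MF h) (𝓝[>] x) (𝓝 (max (MF h x) R)) := by
  rw [Metric.tendsto_nhdsWithin_nhds]
  intro ε hε
  set ε' := ε / 3 with hε'def
  have hε' : 0 < ε' := by positivity
  obtain ⟨δ₁, hδ₁, hLb, hRb⟩ := exists_osc hε' hLt hRt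
  -- near-supremum radius
  have hlt : MF h x - ε' < ⨆ r : {r : ℝ // 0 < r}, MA h x r.1 := by
    have : MF h x - ε' < MF h x := by linarith
    exact this
  obtain ⟨r₁, hr₁⟩ := exists_lt_of_lt_ciSup hlt
  set K := C + 1 with hKdef
  have hK : 0 < K := by have := hn.C_nonneg; linarith
  set ρ := δ₁ / 4 with hρdef
  have hρ : 0 < ρ := by positivity
  set δ' := min (min (δ₁ / 2) (ρ * ε' / K)) (r₁.1 * ε' / K) with hδ'def
  have hδ' : 0 < δ' := by
    apply lt_min (lt_min (by positivity) (by positivity))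
    have := r₁.2; positivity
  refine ⟨δ', hδ', ?_⟩
  intro y hy hyd
  set d := y - x with hdd
  have hd0 : 0 < d := sub_pos.2 hy
  have hdlt : d < δ' := by rwa [Real.dist_eq, abs_of_pos hd0] at hyd
  have hd1 : d < δ₁ / 2 := lt_of_lt_of_le hdlt ((min_le_left _ _).trans (min_le_left _ _))
  have hd2 : d < ρ * ε' / K := lt_of_lt_of_le hdlt ((min_le_left _ _).trans (min_le_right _ _))
  have hd3 : d < r₁.1 * ε' / K := lt_of_lt_of_le hdlt (min_le_right _ _)
  set T := max (MF h x) R with hTdef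
  have habs : |y - x| = d := abs_of_pos hd0
  have hmid : (L + R) / 2 - ε' ≤ MF h x :=
    MF_ge_mid hn hδ₁ (fun t ht => by linarith [(abs_lt.1 (hLb t ht)).1])
      (fun t ht => by linarith [(abs_lt.1 (hRb t ht)).1])
  have hub : MF h y ≤ T + 2 * ε' := by
    apply MF_le hn
    intro r hr
    rcases le_or_gt ρ r with hρr | hρr
    · -- large radii
      have hcen := MA_le_center hn (x := x) (y := y) hr
      rw [habs] at hcen
      have hdr : d / r ≤ d / ρ := div_le_div_of_nonneg_left hd0.le hρ hρr
      have hmul : (d / r) * MF h x ≤ (d / ρ) * C :=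
        mul_le_mul hdr (MF_le_C hn x) (MF_nonneg hn x) (by positivity)
      have hsm : (d / ρ) * C ≤ ε' := by
        rw [div_mul_eq_mul_div, div_le_iff₀ hρ]
        have hdK : d * K < ρ * ε' := (lt_div_iff₀ hK).1 hd2
        nlinarith [hn.C_nonneg, hd0.le]
      have hTm : MF h x ≤ T := le_max_left _ _
      calc MA h y r ≤ (1 + d / r) * MF h x := hcen
        _ = MF h x + (d / r) * MF h x := by ring
        _ ≤ T + 2 * ε' := by linarith
    · -- small radii
      set c := max x (y - r) with hcdef
      have hc1 : y - r ≤ c := le_max_right _ _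
      have hc2 : x ≤ c := le_max_left _ _
      have hc3 : c ≤ y := max_le hy.le (by linarith)
      have hyr2 : y + r < x + δ₁ := by
        have : δ' ≤ δ₁ / 2 := (min_le_left _ _).trans (min_le_left _ _)
        have : d < δ₁ / 2 := hd1
        simp only [hρdef] at hρr
        linarith
      have i1 : ∫ t in (y - r)..c, h t ≤ (c - (y - r)) * (L + ε') := by
        apply int_le_of_forall_Ioo hn hc1
        intro t ht
        rcases le_or_gt (y - r) x with hxyr | hxyr
        · have hcx : c = x := max_eq_left hxyr
          rw [hcx] at ht
          have htm : t ∈ Ioo (x - δ₁) x := by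
            constructor
            · have : x - ρ < y - r := by simp only [hρdef] at hρr ⊢; linarith
              have : x - δ₁ < y - r := by simp only [hρdef] at this; linarith
              linarith [ht.1]
            · exact ht.2
          linarith [(abs_lt.1 (hLb t htm)).2]
        · have hcx : c = y - r := max_eq_right hxyr.le
          rw [hcx] at ht
          exact absurd (ht.1.trans ht.2) (lt_irrefl _)
      have i2 : ∫ t in c..(y + r), h t ≤ ((y + r) - c) * (R + ε') := by
        apply int_le_of_forall_Ioo hn (by linarith)
        intro t ht
        have htm : t ∈ Ioo x (x + δ₁) := ⟨lt_of_le_of_lt hc2 ht.1, by linarith [ht.2]⟩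
        linarith [(abs_lt.1 (hRb t htm)).2]
      have esplit : (∫ t in (y - r)..c, h t) + (∫ t in c..(y + r), h t) =
          ∫ t in (y - r)..(y + r), h t :=
        intervalIntegral.integral_add_adjacent_intervals (hn.integrable _ _) (hn.integrable _ _)
      set a := c - (y - r) with hadef
      have ha0 : 0 ≤ a := by simp only [hadef]; linarith
      have har : a ≤ r := by simp only [hadef]; linarith
      set V := max R ((L + R) / 2) with hVdef
      have hLR : a * L + (2 * r - a) * R ≤ 2 * r * V := by
        rcases le_total L R with hLR | hLR
        · have h1 : R ≤ V := le_max_left _ _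
          nlinarith
        · have h1 : (L + R) / 2 ≤ V := le_max_right _ _
          nlinarith
      have hVT : V + ε' ≤ T + 2 * ε' := by
        have hRT : R ≤ T := le_max_right _ _
        have hmT : MF h x ≤ T := le_max_left _ _
        have : V ≤ T + ε' := max_le (by linarith) (by linarith)
        linarith
      have hMAb : MA h y r ≤ V + ε' := by
        unfold MA
        rw [← esplit]
        have hsum : (∫ t in (y - r)..c, h t) + (∫ t in c..(y + r), h t) ≤
            2 * r * V + 2 * r * ε' := by
          have hyc : (y + r) - c = 2 * r - a := by simp only [hadef]; ring
          have halg : a * (L + ε') + (2 * r - a) * (R + ε') =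
              a * L + (2 * r - a) * R + 2 * r * ε' := by ring
          rw [hyc] at i2
          calc (∫ t in (y - r)..c, h t) + (∫ t in c..(y + r), h t)
              ≤ a * (L + ε') + (2 * r - a) * (R + ε') := add_le_add i1 i2
            _ = a * L + (2 * r - a) * R + 2 * r * ε' := halg
            _ ≤ 2 * r * V + 2 * r * ε' := by linarith
        calc (1/(2*r)) * ((∫ t in (y - r)..c, h t) + ∫ t in c..(y + r), h t)
            ≤ (1/(2*r)) * (2 * r * V + 2 * r * ε') :=
              mul_le_mul_of_nonneg_left hsum (by positivity)
          _ = V + ε' := by field_simp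
      linarith
  have hlb : T - 2 * ε' ≤ MF h y := by
    have l1 : MF h x - 2 * ε' ≤ MF h y := by
      have hsh := MA_ge_shift hn (x := x) (y := y) r₁.2
      rw [habs] at hsh
      have hCd : (C / r₁.1) * d ≤ ε' := by
        rw [div_mul_eq_mul_div, div_le_iff₀ r₁.2]
        have hdK : d * K < r₁.1 * ε' := (lt_div_iff₀ hK).1 hd3
        nlinarith [hn.C_nonneg, hd0.le]
      have hMA1 := MA_le_MF hn y r₁
      linarith
    have l2 : R - 2 * ε' ≤ MF h y := by
      have hhalf : 0 < d / 2 := by positivity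
      have hin : ∀ t ∈ Ioo (y - d / 2) (y + d / 2), R - ε' ≤ h t := by
        intro t ht
        have htm : t ∈ Ioo x (x + δ₁) :=
          ⟨by simp only [hdd] at ht ⊢; linarith [ht.1], by linarith [ht.2, hd1]⟩
        linarith [(abs_lt.1 (hRb t htm)).1]
      have hint := int_ge_of_forall_Ioo hn (a := y - d / 2) (b := y + d / 2) (by linarith) hin
      have hMA : R - ε' ≤ MA h y (d / 2) := by
        unfold MA
        have he : y + d / 2 - (y - d / 2) = 2 * (d / 2) := by ring
        rw [he] at hint
        calc R - ε' = (1/(2*(d/2))) * (2 * (d / 2) * (R - ε')) := by field_simp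
          _ ≤ (1/(2*(d/2))) * ∫ t in (y - d / 2)..(y + d / 2), h t :=
              mul_le_mul_of_nonneg_left hint (by positivity)
      linarith [MA_le_MF hn y ⟨d / 2, hhalf⟩]
    have : T ≤ MF h y + 2 * ε' := max_le (by linarith) (by linarith)
    linarith
  rw [Real.dist_eq, abs_lt]
  constructor <;> simp only [hε'def] at hub hlb <;> linarith

lemma MF_reflect (h : ℝ → ℝ) (x y : ℝ) : MF (fun t => h (2 * x - t)) y = MF h (2 * x - y) := by
  unfold MF MA
  congr 1
  funext r
  congr 1
  rw [intervalIntegral.integral_comp_sub_left (f := h) (d := 2 * x)]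
  have e1 : 2 * x - (y + r.1) = 2 * x - y - r.1 := by ring
  have e2 : 2 * x - (y - r.1) = 2 * x - y + r.1 := by ring
  rw [e1, e2]

lemma tendsto_reflect_gt (x : ℝ) :
    Tendsto (fun t : ℝ => 2 * x - t) (𝓝[>] x) (𝓝[<] x) := by
  apply tendsto_nhdsWithin_of_tendsto_nhds_of_eventually_within
  · have h1 : Tendsto (fun t : ℝ => 2 * x - t) (𝓝 x) (𝓝 (2 * x - x)) :=
      (continuous_const.sub continuous_id).tendsto x
    have : 2 * x - x = x := by ring
    rw [this] at h1
    exact h1.mono_left nhdsWithin_le_nhds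
  · filter_upwards [self_mem_nhdsWithin] with t ht
    simp only [mem_Ioi] at ht
    simp only [mem_Iio]
    linarith

lemma tendsto_reflect_lt (x : ℝ) :
    Tendsto (fun t : ℝ => 2 * x - t) (𝓝[<] x) (𝓝[>] x) := by
  apply tendsto_nhdsWithin_of_tendsto_nhds_of_eventually_within
  · have h1 : Tendsto (fun t : ℝ => 2 * x - t) (𝓝 x) (𝓝 (2 * x - x)) :=
      (continuous_const.sub continuous_id).tendsto x
    have : 2 * x - x = x := by ring
    rw [this] at h1
    exact h1.mono_left nhdsWithin_le_nhds
  · filter_upwards [self_mem_nhdsWithin] with t ht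
    simp only [mem_Iio] at ht
    simp only [mem_Ioi]
    linarith

lemma MF_tendsto_left (hn : Nice h C) {x L R : ℝ}
    (hLt : Tendsto h (𝓝[<] x) (𝓝 L)) (hRt : Tendsto h (𝓝[>] x) (𝓝 R)) :
    Tendsto (MF h) (𝓝[<] x) (𝓝 (max (MF h x) L)) := by
  set h' : ℝ → ℝ := fun t => h (2 * x - t) with hh'
  have hn' : Nice h' C :=
    ⟨hn.meas.comp (measurable_const.sub measurable_id), fun t => hn.nonneg _,
      fun t => hn.bound _⟩
  have hL' : Tendsto h' (𝓝[>] x) (𝓝 L) := hLt.comp (tendsto_reflect_gt x)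
  have hR' : Tendsto h' (𝓝[<] x) (𝓝 R) := hRt.comp (tendsto_reflect_lt x)
  have main := MF_tendsto_right hn' (x := x) hR' hL'
  have hMFx : MF h' x = MF h x := by
    rw [hh', MF_reflect]
    congr 1
    ring
  rw [hMFx] at main
  have hcomp := main.comp (tendsto_reflect_lt x)
  apply hcomp.congr
  intro y
  simp only [Function.comp_apply]
  rw [hh', MF_reflect]
  congr 1
  ring

lemma evar_le_totalVar (g : ℝ → ℂ) : eVariationOn g Set.univ ≤ totalVar g := by
  apply iSup_le
  rintro ⟨n, u, hu, -⟩
  set φ : ℤ → ℝ := fun m => u (min m.toNat n) with hφdef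
  have hφm : Monotone φ := fun a b hab =>
    hu (min_le_min (Int.toNat_le_toNat hab) le_rfl)
  refine le_trans ?_ (le_iSup
    (fun ψ : {ψ : ℤ → ℝ // Monotone ψ} =>
      ∑' m : ℤ, ENNReal.ofReal ‖g (ψ.1 (m + 1)) - g (ψ.1 m)‖) ⟨φ, hφm⟩)
  set f : ℤ → ENNReal := fun m => ENNReal.ofReal ‖g (φ (m + 1)) - g (φ m)‖ with hfdef
  have heq : ∑ i ∈ Finset.range n, edist (g (u (i + 1))) (g (u i)) =
      ∑ i ∈ Finset.range n, f (i : ℤ) := by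
    apply Finset.sum_congr rfl
    intro i hi
    have hi' := Finset.mem_range.1 hi
    have e1 : φ ((i : ℤ) + 1) = u (i + 1) := by
      simp only [hφdef]
      congr 1
      have h1 : ((i : ℤ) + 1).toNat = i + 1 := by omega
      rw [h1]
      exact min_eq_left (by omega)
    have e2 : φ (i : ℤ) = u i := by
      simp only [hφdef]
      congr 1
      have h1 : ((i : ℤ)).toNat = i := by omega
      rw [h1]
      exact min_eq_left (by omega)
    rw [hfdef]
    simp only
    rw [e1, e2, edist_dist, dist_eq_norm]
  rw [heq]
  have hsum := ENNReal.sum_le_tsum (f := f)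
    ((Finset.range n).map ⟨(fun i : ℕ => (i : ℤ)), fun a b hab => by simpa using hab⟩)
  rw [Finset.sum_map] at hsum
  exact hsum

end StmtAux

open StmtAux in
theorem stmt4 (g : ℝ → ℂ) (hmeas : Measurable g) (hBV : totalVar g ≠ ⊤)
    (x : ℝ) :
    ∃ l r : ℝ, Tendsto (cHL g) (𝓝[<] x) (𝓝 l) ∧ Tendsto (cHL g) (𝓝[>] x) (𝓝 r) ∧
      cHL g x = min l r := by
  classical
  set h : ℝ → ℝ := fun t => ‖g t‖ with hhdef
  -- bounded variation of g on univ
  have hbvg : BoundedVariationOn g Set.univ :=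
    ne_top_of_le_ne_top hBV (evar_le_totalVar g)
  -- bounded variation of h on univ
  have hbvh : BoundedVariationOn h Set.univ := by
    have := lipschitzWith_one_norm.comp_boundedVariationOn (g := g) (s := Set.univ) hbvg
    exact this
  -- boundedness of h
  set V := eVariationOn h Set.univ with hVdef
  set C : ℝ := h 0 + V.toReal with hCdef
  have hbd : ∀ t, h t ≤ C := by
    intro t
    have h1 := eVariationOn.edist_le h (Set.mem_univ t) (Set.mem_univ 0)
    rw [edist_dist] at h1
    have h2 : dist (h t) (h 0) ≤ V.toReal := by
      have h3 := ENNReal.toReal_mono hbvh h1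
      rwa [ENNReal.toReal_ofReal dist_nonneg] at h3
    rw [Real.dist_eq] at h2
    have := le_abs_self (h t - h 0)
    linarith
  have hn : Nice h C := ⟨hmeas.norm, fun t => norm_nonneg _, hbd⟩
  -- one-sided limits of h
  obtain ⟨p, q, hp, hq, hpq⟩ :=
    (hbvh.locallyBoundedVariationOn).exists_monotoneOn_sub_monotoneOn
  rw [monotoneOn_univ] at hp hq
  have hLp := hp.tendsto_nhdsLT x
  have hLq := hq.tendsto_nhdsLT x
  have hRp := hp.tendsto_nhdsGT x
  have hRq := hq.tendsto_nhdsGT x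
  set L : ℝ := sSup (p '' Iio x) - sSup (q '' Iio x) with hLdef
  set R : ℝ := sInf (p '' Ioi x) - sInf (q '' Ioi x) with hRdef
  have hLt : Tendsto h (𝓝[<] x) (𝓝 L) := by
    have := hLp.sub hLq
    apply this.congr
    intro y
    rw [hpq]
    rfl
  have hRt : Tendsto h (𝓝[>] x) (𝓝 R) := by
    have := hRp.sub hRq
    apply this.congr
    intro y
    rw [hpq]
    rfl
  have hcHL : cHL g = MF h := rfl
  refine ⟨max (MF h x) L, max (MF h x) R, ?_, ?_, ?_⟩
  · rw [hcHL]; exact MF_tendsto_left hn hLt hRt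
  · rw [hcHL]; exact MF_tendsto_right hn hLt hRt
  · rw [hcHL]
    have hmid : min L R ≤ MF h x := by
      have hall : ∀ ε > (0:ℝ), (L + R) / 2 ≤ MF h x + ε := by
        intro ε hε
        obtain ⟨δ, hδ, hLb, hRb⟩ := exists_osc hε hLt hRt
        have := MF_ge_mid hn (L := L) (R := R) (ε := ε) hδ
          (fun t ht => by linarith [(abs_lt.1 (hLb t ht)).1])
          (fun t ht => by linarith [(abs_lt.1 (hRb t ht)).1])
        linarith
      have h2 : (L + R) / 2 ≤ MF h x := le_of_forall_pos_le_add hall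
      have h3 : min L R ≤ (L + R) / 2 := by
        rcases le_total L R with hLR | hLR
        · rw [min_eq_left hLR]; linarith
        · rw [min_eq_right hLR]; linarith
      linarith
    rw [← max_min_distrib_left, max_eq_left hmid]
end

section
/- Let G : ℤ → ℂ be of bounded variation and let g : ℝ → ℂ be its piecewise-constant extension g(x) = G(n) for x ∈ [n−1/2, n+1/2). Then for every n ∈ ℤ, the continuous centered maximal function of g at n equals the discrete centered maximal function of G at n: Mg(n) = MG(n). -/
open MeasureTheory

/-- Total variation over ℤ: sup over monotone maps φ : ℤ → ℤ. -/
noncomputable def varZ (G : ℤ → ℂ) : ENNReal :=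
  ⨆ φ : {φ : ℤ → ℤ // Monotone φ},
    ∑' m : ℤ, ENNReal.ofReal ‖G (φ.1 (m + 1)) - G (φ.1 m)‖

/-- The discrete centered Hardy–Littlewood maximal operator. -/
noncomputable def dHL (G : ℤ → ℂ) (n : ℤ) : ℝ :=
  ⨆ m : ℕ, (1 / (2 * (m : ℝ) + 1)) * ∑ y ∈ Finset.Icc (n - (m : ℤ)) (n + (m : ℤ)), ‖G y‖

/-- A function of bounded variation is bounded. -/
lemma varZ_bound (G : ℤ → ℂ) (hBV : varZ G ≠ ⊤) (k : ℤ) :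
    ‖G k‖ ≤ ‖G 0‖ + (varZ G).toReal := by
  have key : ENNReal.ofReal ‖G k - G 0‖ ≤ varZ G := by
    rcases le_or_gt 0 k with hk | hk
    · set φ : ℤ → ℤ := fun m => if m ≤ 0 then 0 else k with hφdef
      have hφ : Monotone φ := by
        intro a b hab
        simp only [hφdef]
        split_ifs <;> omega
      have h1 : ENNReal.ofReal ‖G k - G 0‖
          = ENNReal.ofReal ‖G (φ (0 + 1)) - G (φ 0)‖ := by
        simp [hφdef]
      rw [h1]
      refine le_trans (ENNReal.le_tsum
        (f := fun m : ℤ => ENNReal.ofReal ‖G (φ (m + 1)) - G (φ m)‖) 0) ?_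
      exact le_iSup (fun ψ : {ψ : ℤ → ℤ // Monotone ψ} =>
        ∑' m : ℤ, ENNReal.ofReal ‖G (ψ.1 (m + 1)) - G (ψ.1 m)‖) ⟨φ, hφ⟩
    · set φ : ℤ → ℤ := fun m => if m ≤ 0 then k else 0 with hφdef
      have hφ : Monotone φ := by
        intro a b hab
        simp only [hφdef]
        split_ifs <;> omega
      have h1 : ENNReal.ofReal ‖G k - G 0‖
          = ENNReal.ofReal ‖G (φ (0 + 1)) - G (φ 0)‖ := by
        simp [hφdef, norm_sub_rev]
      rw [h1]
      refine le_trans (ENNReal.le_tsum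
        (f := fun m : ℤ => ENNReal.ofReal ‖G (φ (m + 1)) - G (φ m)‖) 0) ?_
      exact le_iSup (fun ψ : {ψ : ℤ → ℤ // Monotone ψ} =>
        ∑' m : ℤ, ENNReal.ofReal ‖G (ψ.1 (m + 1)) - G (ψ.1 m)‖) ⟨φ, hφ⟩
  have h2 : ‖G k - G 0‖ ≤ (varZ G).toReal := by
    have := ENNReal.toReal_mono hBV key
    rwa [ENNReal.toReal_ofReal (norm_nonneg _)] at this
  calc ‖G k‖ = ‖G 0 + (G k - G 0)‖ := by ring_nf
    _ ≤ ‖G 0‖ + ‖G k - G 0‖ := norm_add_le _ _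
    _ ≤ ‖G 0‖ + (varZ G).toReal := by linarith

/-- The elementary averaging inequality: a partial-cell centered average is dominated
by one of the two adjacent full-cell averages. -/
lemma avg_ineq (S d s θ : ℝ) (hS : 0 ≤ S) (hd : 0 ≤ d) (hs : 0 < s)
    (hθ0 : 0 ≤ θ) (hθ1 : θ ≤ 1) :
    (S + θ * d) / (s + 2 * θ) ≤ max (S / s) ((S + d) / (s + 2)) := by
  rcases le_or_gt (d * s) (2 * S) with h | h
  · refine le_max_of_le_left ?_
    rw [div_le_div_iff₀ (by linarith) hs]
    nlinarith
  · refine le_max_of_le_right ?_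
    rw [div_le_div_iff₀ (by linarith) (by linarith)]
    nlinarith

lemma sum_Icc_extend (a b : ℤ) (hab : a ≤ b) (f : ℤ → ℝ) :
    ∑ y ∈ Finset.Icc (a - 1) (b + 1), f y
      = f (a - 1) + (∑ y ∈ Finset.Icc a b, f y) + f (b + 1) := by
  have h1 : Finset.Icc (a - 1) (b + 1) = insert (a - 1) (insert (b + 1) (Finset.Icc a b)) := by
    ext x
    simp only [Finset.mem_Icc, Finset.mem_insert]
    omega
  have h2 : (a - 1) ∉ insert (b + 1) (Finset.Icc a b) := by
    simp only [Finset.mem_insert, Finset.mem_Icc]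
    omega
  have h3 : (b + 1) ∉ Finset.Icc a b := by
    simp only [Finset.mem_Icc]
    omega
  rw [h1, Finset.sum_insert h2, Finset.sum_insert h3]
  ring

theorem stmt6 (G : ℤ → ℂ) (hBV : varZ G ≠ ⊤) (g : ℝ → ℂ)
    (hg : ∀ n : ℤ, ∀ x ∈ Set.Ico ((n : ℝ) - 1/2) ((n : ℝ) + 1/2), g x = G n) :
    ∀ n : ℤ, cHL g (n : ℝ) = dHL G n := by
  intro n
  haveI : Nonempty {r : ℝ // 0 < r} := ⟨⟨1, one_pos⟩⟩
  set C : ℝ := ‖G 0‖ + (varZ G).toReal with hCdef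
  have hGb : ∀ k : ℤ, ‖G k‖ ≤ C := varZ_bound G hBV
  have hC0 : 0 ≤ C := le_trans (norm_nonneg _) (hGb 0)
  -- g is the floor-based extension
  have hgf : ∀ x : ℝ, g x = G ⌊x + 1/2⌋ := by
    intro x
    refine hg _ x ⟨?_, ?_⟩
    · have := Int.floor_le (x + 1/2)
      linarith
    · have := Int.lt_floor_add_one (x + 1/2)
      push_cast at this ⊢
      linarith
  have hgb : ∀ x : ℝ, ‖g x‖ ≤ C := fun x => by rw [hgf]; exact hGb _
  have hmeas : Measurable fun t : ℝ => ‖g t‖ := by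
    have heq : (fun t : ℝ => ‖g t‖) = fun t : ℝ => ‖G ⌊t + 1/2⌋‖ :=
      funext fun t => by rw [hgf]
    rw [heq]
    exact (measurable_from_top (f := fun k : ℤ => ‖G k‖)).comp
      (Int.measurable_floor.comp (measurable_id.add_const _))
  have hint : ∀ a b : ℝ, IntervalIntegrable (fun t => ‖g t‖) volume a b := by
    intro a b
    rw [intervalIntegrable_iff]
    refine Integrable.mono' (g := fun _ => C)
      (integrableOn_const measure_Ioc_lt_top.ne)
      hmeas.aestronglyMeasurable.restrict ?_
    exact Filter.Eventually.of_forall fun t => by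
      simpa [abs_of_nonneg (norm_nonneg (g t))] using hgb t
  -- integral of constant cell piece
  have hcell : ∀ (k : ℤ) (u v : ℝ), (k : ℝ) - 1/2 ≤ u → u ≤ v → v ≤ (k : ℝ) + 1/2 →
      ∫ t in u..v, ‖g t‖ = (v - u) * ‖G k‖ := by
    intro k u v h1 h2 h3
    have hcong : ∫ t in u..v, ‖g t‖ = ∫ _ in u..v, ‖G k‖ := by
      apply intervalIntegral.integral_congr_ae
      have hpt : (volume : Measure ℝ) {(k : ℝ) + 1/2} = 0 := measure_singleton _
      filter_upwards [measure_eq_zero_iff_ae_notMem.mp hpt] with t ht htuv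
      rw [Set.uIoc_of_le h2] at htuv
      have htne : t ≠ (k : ℝ) + 1/2 := by simpa using ht
      have : g t = G k := hg k t ⟨by linarith [htuv.1],
        lt_of_le_of_ne (le_trans htuv.2 h3) htne⟩
      rw [this]
    rw [hcong, intervalIntegral.integral_const, smul_eq_mul]
  -- the key full-cell integral formula
  have hF : ∀ m : ℕ, (∫ t in ((n : ℝ) - ((m : ℝ) + 1/2))..((n : ℝ) + ((m : ℝ) + 1/2)), ‖g t‖)
      = ∑ y ∈ Finset.Icc (n - (m : ℤ)) (n + (m : ℤ)), ‖G y‖ := by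
    intro m
    induction m with
    | zero =>
      simp only [Nat.cast_zero, CharP.cast_eq_zero, zero_add, sub_zero, add_zero]
      rw [hcell n ((n : ℝ) - 1/2) ((n : ℝ) + 1/2) (by linarith) (by linarith) (by linarith)]
      rw [Finset.Icc_self, Finset.sum_singleton]
      ring
    | succ m ih =>
      have hcast : ((m + 1 : ℕ) : ℝ) = (m : ℝ) + 1 := by push_cast; ring
      set A : ℝ := (n : ℝ) - (((m : ℝ) + 1) + 1/2) with hA
      set p : ℝ := (n : ℝ) - ((m : ℝ) + 1/2) with hp
      set q : ℝ := (n : ℝ) + ((m : ℝ) + 1/2) with hq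
      set B : ℝ := (n : ℝ) + (((m : ℝ) + 1) + 1/2) with hB
      have hm0 : (0 : ℝ) ≤ (m : ℝ) := Nat.cast_nonneg m
      have h1 : (∫ t in A..p, ‖g t‖) + (∫ t in p..B, ‖g t‖) = ∫ t in A..B, ‖g t‖ :=
        intervalIntegral.integral_add_adjacent_intervals (hint A p) (hint p B)
      have h2 : (∫ t in p..q, ‖g t‖) + (∫ t in q..B, ‖g t‖) = ∫ t in p..B, ‖g t‖ :=
        intervalIntegral.integral_add_adjacent_intervals (hint p q) (hint q B)
      have hleft : (∫ t in A..p, ‖g t‖) = ‖G (n - (m + 1))‖ := by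
        rw [hcell (n - (m + 1)) A p (by push_cast [hA]; linarith)
          (by rw [hA, hp]; linarith) (by push_cast [hp]; linarith)]
        have : p - A = 1 := by rw [hA, hp]; ring
        rw [this, one_mul]
      have hright : (∫ t in q..B, ‖g t‖) = ‖G (n + (m + 1))‖ := by
        rw [hcell (n + (m + 1)) q B (by push_cast [hq]; linarith)
          (by rw [hq, hB]; linarith) (by push_cast [hB]; linarith)]
        have : B - q = 1 := by rw [hB, hq]; ring
        rw [this, one_mul]
      have hsum : ∑ y ∈ Finset.Icc (n - ((m + 1 : ℕ) : ℤ)) (n + ((m + 1 : ℕ) : ℤ)), ‖G y‖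
          = ‖G (n - (m + 1))‖ + (∑ y ∈ Finset.Icc (n - (m : ℤ)) (n + (m : ℤ)), ‖G y‖)
            + ‖G (n + (m + 1))‖ := by
        have e1 : n - ((m + 1 : ℕ) : ℤ) = (n - (m : ℤ)) - 1 := by push_cast; ring
        have e2 : n + ((m + 1 : ℕ) : ℤ) = (n + (m : ℤ)) + 1 := by push_cast; ring
        rw [e1, e2, sum_Icc_extend (n - (m : ℤ)) (n + (m : ℤ)) (by omega) (fun y => ‖G y‖)]
        congr 2 <;> push_cast <;> ring_nf
      have hAB : (∫ t in ((n : ℝ) - (((m + 1 : ℕ) : ℝ) + 1/2))..((n : ℝ) + (((m + 1 : ℕ) : ℝ)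
          + 1/2)), ‖g t‖) = ∫ t in A..B, ‖g t‖ := by
        rw [hA, hB, hcast]
      rw [hAB, ← h1, ← h2, hleft, hright, hsum, ih]
      ring
  set D : ℕ → ℝ := fun m =>
    (1 / (2 * (m : ℝ) + 1)) * ∑ y ∈ Finset.Icc (n - (m : ℤ)) (n + (m : ℤ)), ‖G y‖ with hD
  set Af : {r : ℝ // 0 < r} → ℝ := fun r =>
    (1 / (2 * r.1)) * ∫ t in ((n : ℝ) - r.1)..((n : ℝ) + r.1), ‖g t‖ with hAf
  have hSnonneg : ∀ m : ℕ, 0 ≤ ∑ y ∈ Finset.Icc (n - (m : ℤ)) (n + (m : ℤ)), ‖G y‖ :=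
    fun m => Finset.sum_nonneg fun y _ => norm_nonneg _
  have hDC : ∀ m : ℕ, D m ≤ C := by
    intro m
    have hcard : (Finset.Icc (n - (m : ℤ)) (n + (m : ℤ))).card = 2 * m + 1 := by
      rw [Int.card_Icc]
      omega
    have hsum : ∑ y ∈ Finset.Icc (n - (m : ℤ)) (n + (m : ℤ)), ‖G y‖
        ≤ (2 * (m : ℝ) + 1) * C := by
      calc ∑ y ∈ Finset.Icc (n - (m : ℤ)) (n + (m : ℤ)), ‖G y‖
          ≤ ∑ _y ∈ Finset.Icc (n - (m : ℤ)) (n + (m : ℤ)), C :=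
            Finset.sum_le_sum fun y _ => hGb y
        _ = (2 * (m : ℝ) + 1) * C := by
            rw [Finset.sum_const, hcard, nsmul_eq_mul]
            push_cast
            ring
    have hpos : (0 : ℝ) < 2 * (m : ℝ) + 1 := by positivity
    rw [hD]
    calc (1 / (2 * (m : ℝ) + 1)) * ∑ y ∈ Finset.Icc (n - (m : ℤ)) (n + (m : ℤ)), ‖G y‖
        ≤ (1 / (2 * (m : ℝ) + 1)) * ((2 * (m : ℝ) + 1) * C) := by
          apply mul_le_mul_of_nonneg_left hsum
          positivity
      _ = C := by field_simp
  have hbddD : BddAbove (Set.range D) := ⟨C, by rintro _ ⟨m, rfl⟩; exact hDC m⟩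
  -- A(m + 1/2) = D m
  have hAD : ∀ m : ℕ, Af ⟨(m : ℝ) + 1/2, by positivity⟩ = D m := by
    intro m
    rw [hAf, hD]
    simp only
    rw [hF m]
    congr 1
    rw [show 2 * ((m : ℝ) + 1/2) = 2 * (m : ℝ) + 1 by ring]
  -- every continuous average is at most dHL
  have hkey : ∀ r : {r : ℝ // 0 < r}, Af r ≤ dHL G n := by
    intro ⟨r, hr⟩
    have hDle : ∀ m : ℕ, D m ≤ dHL G n := fun m => le_ciSup hbddD m
    rcases le_or_gt r (1/2) with hr2 | hr2
    · -- small radius: average equals ‖G n‖ = D 0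
      have : Af ⟨r, hr⟩ = ‖G n‖ := by
        rw [hAf]
        simp only
        rw [hcell n ((n : ℝ) - r) ((n : ℝ) + r) (by linarith) (by linarith) (by linarith)]
        have h2r : ((n : ℝ) + r) - ((n : ℝ) - r) = 2 * r := by ring
        rw [h2r]
        field_simp
      rw [this]
      refine le_trans ?_ (hDle 0)
      rw [hD]
      simp
    · -- large radius
      obtain ⟨m', hm'⟩ : ∃ m' : ℕ, ⌈r - 1/2⌉ = (m' : ℤ) + 1 := by
        have h1 : (1 : ℤ) ≤ ⌈r - 1/2⌉ := by
          rw [Int.le_ceil_iff]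
          norm_num
          linarith
        exact ⟨(⌈r - 1/2⌉ - 1).toNat, by omega⟩
      have hub : r ≤ (m' : ℝ) + 1 + 1/2 := by
        have := Int.le_ceil (r - 1/2)
        rw [hm'] at this
        push_cast at this
        linarith
      have hlb : (m' : ℝ) + 1/2 < r := by
        have := Int.ceil_lt_add_one (r - 1/2)
        rw [hm'] at this
        push_cast at this
        linarith
      set θ : ℝ := r - ((m' : ℝ) + 1/2) with hθ
      have hθ0 : 0 < θ := by rw [hθ]; linarith
      have hθ1 : θ ≤ 1 := by rw [hθ]; linarith
      set p : ℝ := (n : ℝ) - ((m' : ℝ) + 1/2) with hp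
      set q : ℝ := (n : ℝ) + ((m' : ℝ) + 1/2) with hq
      have hm0 : (0 : ℝ) ≤ (m' : ℝ) := Nat.cast_nonneg m'
      have h1 : (∫ t in ((n : ℝ) - r)..p, ‖g t‖) + (∫ t in p..((n : ℝ) + r), ‖g t‖)
          = ∫ t in ((n : ℝ) - r)..((n : ℝ) + r), ‖g t‖ :=
        intervalIntegral.integral_add_adjacent_intervals (hint _ _) (hint _ _)
      have h2 : (∫ t in p..q, ‖g t‖) + (∫ t in q..((n : ℝ) + r), ‖g t‖)
          = ∫ t in p..((n : ℝ) + r), ‖g t‖ :=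
        intervalIntegral.integral_add_adjacent_intervals (hint _ _) (hint _ _)
      have hleft : (∫ t in ((n : ℝ) - r)..p, ‖g t‖) = θ * ‖G (n - (m' + 1))‖ := by
        rw [hcell (n - (m' + 1)) ((n : ℝ) - r) p (by push_cast; linarith)
          (by rw [hp]; linarith) (by push_cast [hp]; linarith)]
        rw [show p - ((n : ℝ) - r) = θ by rw [hp, hθ]; ring]
      have hright : (∫ t in q..((n : ℝ) + r), ‖g t‖) = θ * ‖G (n + (m' + 1))‖ := by
        rw [hcell (n + (m' + 1)) q ((n : ℝ) + r) (by push_cast [hq]; linarith)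
          (by rw [hq]; linarith) (by push_cast; linarith)]
        rw [show ((n : ℝ) + r) - q = θ by rw [hq, hθ]; ring]
      have hmid : (∫ t in p..q, ‖g t‖)
          = ∑ y ∈ Finset.Icc (n - (m' : ℤ)) (n + (m' : ℤ)), ‖G y‖ := by
        rw [hp, hq]; exact hF m'
      set S : ℝ := ∑ y ∈ Finset.Icc (n - (m' : ℤ)) (n + (m' : ℤ)), ‖G y‖ with hS
      set d : ℝ := ‖G (n - (m' + 1))‖ + ‖G (n + (m' + 1))‖ with hd
      have hval : Af ⟨r, hr⟩ = (S + θ * d) / (2 * (m' : ℝ) + 1 + 2 * θ) := by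
        rw [hAf]
        simp only
        rw [← h1, ← h2, hleft, hright, hmid]
        rw [show 2 * r = 2 * (m' : ℝ) + 1 + 2 * θ by rw [hθ]; ring]
        rw [one_div, inv_mul_eq_div]
        congr 1
        rw [hd]
        ring
      have hineq := avg_ineq S d (2 * (m' : ℝ) + 1) θ (hSnonneg m')
        (by rw [hd]; positivity) (by positivity) hθ0.le hθ1
      rw [hval]
      refine le_trans hineq (max_le ?_ ?_)
      · refine le_trans ?_ (hDle m')
        rw [hD]
        simp only
        rw [one_div, inv_mul_eq_div, hS]
      · refine le_trans ?_ (hDle (m' + 1))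
        rw [hD]
        simp only
        have hsum : ∑ y ∈ Finset.Icc (n - ((m' + 1 : ℕ) : ℤ)) (n + ((m' + 1 : ℕ) : ℤ)), ‖G y‖
            = S + d := by
          have e1 : n - ((m' + 1 : ℕ) : ℤ) = (n - (m' : ℤ)) - 1 := by push_cast; ring
          have e2 : n + ((m' + 1 : ℕ) : ℤ) = (n + (m' : ℤ)) + 1 := by push_cast; ring
          rw [e1, e2, sum_Icc_extend (n - (m' : ℤ)) (n + (m' : ℤ)) (by omega) (fun y => ‖G y‖),
            hS, hd]
          have e3 : n - (m' : ℤ) - 1 = n - ((m' : ℤ) + 1) := by ring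
          have e4 : n + (m' : ℤ) + 1 = n + ((m' : ℤ) + 1) := by ring
          rw [e3, e4]
          push_cast
          ring
        rw [hsum, one_div, inv_mul_eq_div]
        have : 2 * ((m' + 1 : ℕ) : ℝ) + 1 = 2 * (m' : ℝ) + 1 + 2 := by push_cast; ring
        rw [this]
  have hbddA : BddAbove (Set.range Af) := by
    refine ⟨C, ?_⟩
    rintro _ ⟨⟨r, hr⟩, rfl⟩
    have hintle : (∫ t in ((n : ℝ) - r)..((n : ℝ) + r), ‖g t‖)
        ≤ ∫ _ in ((n : ℝ) - r)..((n : ℝ) + r), C := by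
      apply intervalIntegral.integral_mono_on (by linarith) (hint _ _) intervalIntegrable_const
      exact fun t _ => hgb t
    rw [intervalIntegral.integral_const, smul_eq_mul] at hintle
    have h2r : ((n : ℝ) + r) - ((n : ℝ) - r) = 2 * r := by ring
    rw [h2r] at hintle
    rw [hAf]
    simp only
    calc (1 / (2 * r)) * ∫ t in ((n : ℝ) - r)..((n : ℝ) + r), ‖g t‖
        ≤ (1 / (2 * r)) * (2 * r * C) := by
          apply mul_le_mul_of_nonneg_left hintle
          positivity
      _ = C := by field_simp
  -- conclude
  have hc : cHL g (n : ℝ) = ⨆ r : {r : ℝ // 0 < r}, Af r := rfl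
  have hdd : dHL G n = ⨆ m : ℕ, D m := rfl
  rw [hc, hdd]
  apply le_antisymm
  · exact ciSup_le fun r => hkey r
  · refine ciSup_le fun m => ?_
    rw [← hAD m]
    exact le_ciSup hbddA ⟨(m : ℝ) + 1/2, by positivity⟩
end
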